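/- Let A be a real matrix. Every vector v in the row span of A can be written as a finite nonnegative linear combination of circuits of A each of which is conformal to v (i.e., each circuit r in the decomposition satisfies sign(r_i) = sign(v_i) for every index i in the support of r). -/

import Mathlib

/-- The row span of a matrix. -/
def rowSpan {d s : ℕ} (A : Matrix (Fin d) (Fin s) ℝ) : Submodule ℝ (Fin s → ℝ) :=
  Submodule.span ℝ (Set.range fun k => A k)

/-- A circuit of a real matrix `A`: a nonzero element of the row span of `A`
with inclusion-minimal support. -/
def IsCircuit {d s : ℕ} (A : Matrix (Fin d) (Fin s) ℝ) (r : Fin s → ℝ) : Prop :=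
  r ∈ rowSpan A ∧ r ≠ 0 ∧
    ∀ w ∈ rowSpan A, w ≠ 0 → {i | w i ≠ 0} ⊆ {i | r i ≠ 0} →
      {i | w i ≠ 0} = {i | r i ≠ 0}

namespace Stmt3Aux

variable {d s : ℕ}

noncomputable def suppF (v : Fin s → ℝ) : Finset (Fin s) :=
  Finset.univ.filter (fun i => v i ≠ 0)

lemma mem_suppF {v : Fin s → ℝ} {i : Fin s} : i ∈ suppF v ↔ v i ≠ 0 := by
  simp [suppF]

def Conf (v w : Fin s → ℝ) : Prop := ∀ i, w i ≠ 0 → 0 < v i * w i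

lemma conf_self (v : Fin s → ℝ) : Conf v v := fun i hi => mul_self_pos.mpr hi

lemma conf_trans {v w u : Fin s → ℝ} (h1 : Conf v w) (h2 : Conf w u) : Conf v u := by
  intro i hi
  have hwu := h2 i hi
  have hwi : w i ≠ 0 := by intro h; rw [h] at hwu; simp at hwu
  have hvw := h1 i hwi
  nlinarith [mul_pos hvw hwu, sq_nonneg (w i)]

lemma sign_eq {a b : ℝ} (h : 0 < a * b) : Real.sign b = Real.sign a := by
  rcases mul_pos_iff.mp h with ⟨ha, hb⟩ | ⟨ha, hb⟩
  · rw [Real.sign_of_pos ha, Real.sign_of_pos hb]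
  · rw [Real.sign_of_neg ha, Real.sign_of_neg hb]

lemma supp_sub_supp {w u : Fin s → ℝ} :
    ({i | w i ≠ 0} ⊆ {i | u i ≠ 0}) ↔ suppF w ⊆ suppF u := by
  simp [Set.subset_def, Finset.subset_iff, mem_suppF]

lemma supp_eq_supp {w u : Fin s → ℝ} :
    ({i | w i ≠ 0} = {i | u i ≠ 0}) ↔ suppF w = suppF u := by
  constructor
  · intro h; ext i; simp only [mem_suppF]; exact Set.ext_iff.mp h i
  · intro h; ext i; simpa only [mem_suppF, Set.mem_setOf_eq] using Finset.ext_iff.mp h i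

/-- The basic step: subtract a suitable positive multiple of `w` from `u`,
killing a coordinate while keeping conformality. -/
lemma step {u w : Fin s → ℝ} (hsub : suppF w ⊆ suppF u)
    (hpos : ∃ i, 0 < u i * w i) :
    ∃ t : ℝ, ∃ j, 0 < t ∧ u j ≠ 0 ∧ (u - t • w) j = 0 ∧ Conf u (u - t • w) ∧
      suppF (u - t • w) ⊆ suppF u := by
  classical
  set T : Finset (Fin s) := Finset.univ.filter (fun i => 0 < u i * w i) with hT
  have hTne : T.Nonempty := by
    obtain ⟨i, hi⟩ := hpos
    exact ⟨i, by simp [hT, hi]⟩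
  obtain ⟨j, hjT, hjmin⟩ := T.exists_min_image (fun i => u i / w i) hTne
  have hj : 0 < u j * w j := by simpa [hT] using hjT
  have hwj : w j ≠ 0 := by intro h; rw [h] at hj; simp at hj
  have huj : u j ≠ 0 := by intro h; rw [h] at hj; simp at hj
  set t := u j / w j with htdef
  have ht : 0 < t := by
    rw [htdef]
    rcases mul_pos_iff.mp hj with ⟨h1, h2⟩ | ⟨h1, h2⟩
    · exact div_pos h1 h2
    · exact div_pos_of_neg_of_neg h1 h2
  refine ⟨t, j, ht, huj, ?_, ?_, ?_⟩
  · simp only [Pi.sub_apply, Pi.smul_apply, smul_eq_mul, htdef]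
    field_simp
    ring
  · intro i hi
    simp only [Pi.sub_apply, Pi.smul_apply, smul_eq_mul] at hi ⊢
    by_cases hwi : w i = 0
    · rw [hwi, mul_zero, sub_zero] at hi ⊢
      exact mul_self_pos.mpr hi
    · have hui : u i ≠ 0 := mem_suppF.mp (hsub (mem_suppF.mpr hwi))
      by_cases hprod : 0 < u i * w i
      · have hiT : i ∈ T := by simp [hT, hprod]
        have hle : t ≤ u i / w i := hjmin i hiT
        set q := u i / w i - t with hq
        have hq0 : 0 ≤ q := by simp [hq]; linarith
        have heq : u i - t * w i = w i * q := by
          rw [hq]; field_simp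
        have hqne : q ≠ 0 := by
          intro h0; apply hi; rw [heq, h0, mul_zero]
        have hqpos : 0 < q := lt_of_le_of_ne hq0 (Ne.symm hqne)
        rw [heq, show u i * (w i * q) = (u i * w i) * q by ring]
        exact mul_pos hprod hqpos
      · have hneg : u i * w i < 0 :=
          lt_of_le_of_ne (not_lt.mp hprod) (mul_ne_zero hui hwi)
        nlinarith [mul_self_pos.mpr hui, mul_pos ht (neg_pos.mpr hneg)]
  · intro i hi
    rw [mem_suppF] at hi ⊢
    by_contra h0
    have hwi : w i = 0 := by
      by_contra hw
      exact (mem_suppF.mp (hsub (mem_suppF.mpr hw))) h0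
    apply hi
    simp [h0, hwi]

/-- There is a circuit conformal to `v` supported inside the support of `v`. -/
lemma exists_circuit_conf (A : Matrix (Fin d) (Fin s) ℝ) {v : Fin s → ℝ} :
    ∀ n (u : Fin s → ℝ), (suppF u).card ≤ n → u ∈ rowSpan A → u ≠ 0 →
      Conf v u → suppF u ⊆ suppF v →
      ∃ r, IsCircuit A r ∧ Conf v r ∧ suppF r ⊆ suppF v := by
  intro n
  induction n with
  | zero =>
    intro u hcard hU hu0 _ _
    exfalso
    apply hu0
    funext i
    by_contra hi
    have : i ∈ suppF u := mem_suppF.mpr hi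
    have : (suppF u).card ≠ 0 := Finset.card_ne_zero_of_mem this
    omega
  | succ n ih =>
    intro u hcard hU hu0 hconf hsubv
    by_cases hc : IsCircuit A u
    · exact ⟨u, hc, hconf, hsubv⟩
    · rw [IsCircuit] at hc
      push_neg at hc
      obtain ⟨w, hwRS, hw0, hwsub, hwne⟩ := hc hU hu0
      rw [supp_sub_supp] at hwsub
      rw [ne_eq, supp_eq_supp] at hwne
      -- get a sign-corrected version of w
      obtain ⟨w', hw'RS, hw'supp, hpos⟩ :
          ∃ w', w' ∈ rowSpan A ∧ suppF w' = suppF w ∧ ∃ i, 0 < u i * w' i := by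
        obtain ⟨i0, hi0⟩ : ∃ i, w i ≠ 0 := by
          by_contra h; push_neg at h; exact hw0 (funext h)
        have hui0 : u i0 ≠ 0 := mem_suppF.mp (hwsub (mem_suppF.mpr hi0))
        by_cases h : 0 < u i0 * w i0
        · exact ⟨w, hwRS, rfl, i0, h⟩
        · refine ⟨-w, neg_mem hwRS, by ext i; simp [mem_suppF], i0, ?_⟩
          have : u i0 * w i0 < 0 :=
            lt_of_le_of_ne (not_lt.mp h) (mul_ne_zero hui0 hi0)
          simp only [Pi.neg_apply, mul_neg]
          linarith
      have hw'sub : suppF w' ⊆ suppF u := hw'supp ▸ hwsub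
      obtain ⟨t, j, ht, huj, hj0, hconf', hsub'⟩ := step hw'sub hpos
      set u' := u - t • w' with hu'
      have hu'RS : u' ∈ rowSpan A := sub_mem hU (Submodule.smul_mem _ t hw'RS)
      have hu'ne : u' ≠ 0 := by
        intro h0
        apply hwne
        rw [← hw'supp]
        have hueq : u = t • w' := sub_eq_zero.mp (hu' ▸ h0)
        ext i
        rw [mem_suppF, mem_suppF, hueq]
        simp [mul_eq_zero, ht.ne']
      have hssub : suppF u' ⊂ suppF u :=
        (Finset.ssubset_iff_of_subset hsub').mpr
          ⟨j, mem_suppF.mpr huj, fun hmem => (mem_suppF.mp hmem) hj0⟩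
      have hcard' : (suppF u').card ≤ n := by
        have := Finset.card_lt_card hssub
        omega
      exact ih u' hcard' hu'RS hu'ne (conf_trans hconf hconf')
        (hsub'.trans hsubv)

/-- Main decomposition with `Conf`. -/
lemma main_aux (A : Matrix (Fin d) (Fin s) ℝ) :
    ∀ n (v : Fin s → ℝ), v ∈ rowSpan A → (suppF v).card ≤ n →
      ∃ (N : ℕ) (c : Fin N → ℝ) (r : Fin N → (Fin s → ℝ)),
        (∀ k, 0 ≤ c k) ∧ (∀ k, IsCircuit A (r k)) ∧
        (∀ k, Conf v (r k)) ∧ v = ∑ k, c k • r k := by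
  intro n
  induction n with
  | zero =>
    intro v hv hcard
    have hv0 : v = 0 := by
      funext i
      by_contra hi
      have : (suppF v).card ≠ 0 := Finset.card_ne_zero_of_mem (mem_suppF.mpr hi)
      omega
    exact ⟨0, fun k => 0, fun k => 0, fun k => le_refl _, fun k => k.elim0,
      fun k => k.elim0, by simp [hv0]⟩
  | succ n ih =>
    intro v hv hcard
    by_cases hv0 : v = 0
    · exact ⟨0, fun k => 0, fun k => 0, fun k => le_refl _, fun k => k.elim0,
        fun k => k.elim0, by simp [hv0]⟩
    · obtain ⟨r, hcirc, hconf, hsubv⟩ :=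
        exists_circuit_conf A (n + 1) v hcard hv hv0 (conf_self v) (subset_refl _)
      have hr0 : r ≠ 0 := hcirc.2.1
      have hpos : ∃ i, 0 < v i * r i := by
        obtain ⟨i0, hi0⟩ : ∃ i, r i ≠ 0 := by
          by_contra h; push_neg at h; exact hr0 (funext h)
        exact ⟨i0, hconf i0 hi0⟩
      obtain ⟨t, j, ht, hvj, hj0, hconfw, hsubw⟩ := step hsubv hpos
      set w := v - t • r with hw
      have hwRS : w ∈ rowSpan A := sub_mem hv (Submodule.smul_mem _ t hcirc.1)
      have hssub : suppF w ⊂ suppF v :=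
        (Finset.ssubset_iff_of_subset hsubw).mpr
          ⟨j, mem_suppF.mpr hvj, fun hmem => (mem_suppF.mp hmem) hj0⟩
      have hcard' : (suppF w).card ≤ n := by
        have := Finset.card_lt_card hssub
        omega
      obtain ⟨N, c, rr, hc, hcircs, hconfs, hsum⟩ := ih w hwRS hcard'
      refine ⟨N + 1, Fin.cons t c, Fin.cons r rr, ?_, ?_, ?_, ?_⟩
      · intro k
        refine Fin.cases ?_ ?_ k
        · simpa using le_of_lt ht
        · intro k'; simpa using hc k'
      · intro k
        refine Fin.cases ?_ ?_ k
        · simpa using hcirc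
        · intro k'; simpa using hcircs k'
      · intro k
        refine Fin.cases ?_ ?_ k
        · simpa using hconf
        · intro k'; simpa using conf_trans hconfw (hconfs k')
      · have hstep : (∑ k : Fin (N + 1),
              (Fin.cons t c : Fin (N + 1) → ℝ) k •
                (Fin.cons r rr : Fin (N + 1) → (Fin s → ℝ)) k)
            = t • r + ∑ k : Fin N, c k • rr k := by
          rw [Fin.sum_univ_succ]
          simp
        rw [hstep, ← hsum, hw]
        abel

end Stmt3Aux

/-- every vector in the row span of `A` is a finite nonnegative
linear combination of circuits of `A` conformal to it. -/
theorem stmt3 {d s : ℕ} (A : Matrix (Fin d) (Fin s) ℝ) (v : Fin s → ℝ)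
    (hv : v ∈ rowSpan A) :
    ∃ (N : ℕ) (c : Fin N → ℝ) (r : Fin N → (Fin s → ℝ)),
      (∀ k, 0 ≤ c k) ∧ (∀ k, IsCircuit A (r k)) ∧
      (∀ k i, r k i ≠ 0 → Real.sign (r k i) = Real.sign (v i)) ∧
      v = ∑ k, c k • r k := by
  obtain ⟨N, c, r, h1, h2, h3, h4⟩ :=
    Stmt3Aux.main_aux A (Stmt3Aux.suppF v).card v hv le_rfl
  exact ⟨N, c, r, h1, h2, fun k i hi => Stmt3Aux.sign_eq (h3 k i hi), h4⟩
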